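/- The imaginary part of ξ = 8·∑_{n=0}^∞ (1/(2n+1))·(1/(1−2i))^{2n+1} equals π; that is, Im(ξ) = π. -/

import Mathlib

theorem im_xi_eq_pi :
    (8 * ∑' n : ℕ, (1 / (2 * (n : ℂ) + 1)) * (1 / (1 - 2 * Complex.I)) ^ (2 * n + 1)).im
      = Real.pi := by
  set z : ℂ := 1 / (1 - 2 * Complex.I) with hzdef
  have hnz : ‖z‖ < 1 := by
    have h : ‖(1 - 2 * Complex.I : ℂ)‖ = Real.sqrt 5 := by
      rw [Complex.norm_def, Complex.normSq_apply]
      norm_num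
    rw [hzdef, norm_div, norm_one, h, div_lt_one (by positivity)]
    nlinarith [Real.sq_sqrt (by norm_num : (5:ℝ) ≥ 0), Real.sqrt_nonneg 5]
  have hIz : ‖Complex.I * z‖ < 1 := by rwa [norm_mul, Complex.norm_I, one_mul]
  have hsum : HasSum (fun n : ℕ ↦ (1 / (2 * (n : ℂ) + 1)) * z ^ (2 * n + 1))
      (-Complex.I * Complex.arctan (Complex.I * z)) := by
    have h := (Complex.hasSum_arctan hIz).mul_left (-Complex.I)
    convert h using 2 with n
    · rfl
    have hone : ((-1 : ℂ)) ^ n * ((-1 : ℂ)) ^ n = 1 := by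
      rw [← mul_pow]; norm_num
    have hI : (Complex.I) ^ (2 * n + 1) = (-1) ^ n * Complex.I := by
      rw [pow_succ, pow_mul, Complex.I_sq]
    rw [mul_pow, hI]
    push_cast
    linear_combination (-(z ^ (2*n+1) * (2*(n:ℂ)+1)⁻¹)) * hone
      + (z ^ (2*n+1) * (2*(n:ℂ)+1)⁻¹ * ((-1:ℂ))^n * ((-1:ℂ))^n) * Complex.I_sq
  rw [hsum.tsum_eq, Complex.arctan]
  have hdiv : (1 + Complex.I * z * Complex.I) / (1 - Complex.I * z * Complex.I)
      = (1 - Complex.I) / 2 := by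
    have hz2 : Complex.I * z * Complex.I = -z := by
      rw [mul_comm, ← mul_assoc, Complex.I_mul_I]; ring
    rw [hz2, hzdef]
    have h : (1 - 2 * Complex.I : ℂ) ≠ 0 := by
      intro hc; have := congrArg Complex.re hc; simp at this
    field_simp
    ring_nf
    have h2 : (2 - Complex.I * 2 : ℂ) ≠ 0 := by
      intro hc; have := congrArg Complex.re hc; simp at this
    field_simp
    have h3 : (1 - Complex.I : ℂ) ≠ 0 := by
      intro hc; have := congrArg Complex.re hc; simp at this
    rw [neg_div', div_eq_iff h3]
    linear_combination (-2) * Complex.I_sq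
  rw [hdiv]
  have harg : Complex.arg ((1 - Complex.I) / 2) = -(Real.pi / 4) := by
    have hs : ((Real.sqrt 2 : ℝ) : ℂ) * ((Real.sqrt 2 : ℝ) : ℂ) = 2 := by
      norm_cast
      exact_mod_cast Real.mul_self_sqrt (by norm_num)
    have h2 : ((1 - Complex.I) / 2 : ℂ)
        = ((Real.sqrt 2 / 2 : ℝ) : ℂ) *
          (Complex.cos ((-(Real.pi / 4) : ℝ) : ℂ)
            + Complex.sin ((-(Real.pi / 4) : ℝ) : ℂ) * Complex.I) := by
      rw [← Complex.ofReal_cos, ← Complex.ofReal_sin]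
      rw [Real.cos_neg, Real.sin_neg, Real.cos_pi_div_four, Real.sin_pi_div_four]
      push_cast
      linear_combination (-(1 - Complex.I)/4) * hs
    rw [h2]
    exact Complex.arg_mul_cos_add_sin_mul_I (r := Real.sqrt 2 / 2) (θ := -(Real.pi / 4))
      (div_pos (Real.sqrt_pos.mpr (by norm_num)) (by norm_num))
      ⟨by linarith [Real.pi_pos], by linarith [Real.pi_pos]⟩
  have hx : (8 * (-Complex.I * (-Complex.I / 2 * Complex.log ((1 - Complex.I) / 2))))
      = -4 * Complex.log ((1 - Complex.I) / 2) := by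
    linear_combination (4 * Complex.log ((1 - Complex.I)/2)) * Complex.I_sq
  rw [hx]
  have him : (-4 * Complex.log ((1 - Complex.I) / 2)).im
      = -4 * (Complex.log ((1 - Complex.I) / 2)).im := by
    have : (-4 : ℂ) = ((-4 : ℝ) : ℂ) := by norm_num
    rw [this, Complex.im_ofReal_mul]
  rw [him, Complex.log_im, harg]
  ring
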